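/- If G is a uniquely 3-list colorable graph, then e(G) ≥ 2·n(G). -/

import Mathlib

/-- A coloring `c` of the vertices is proper if adjacent vertices get different colors. -/
def IsProperColoring {V α : Type*} (G : SimpleGraph V) (c : V → α) : Prop :=
  ∀ ⦃u w⦄, G.Adj u w → c u ≠ c w

/-- `c` is an `L`-coloring of `G`: a proper coloring with `c v ∈ L v` for every vertex `v`. -/
def IsListColoring {V : Type*} (G : SimpleGraph V) (L : V → Finset ℕ) (c : V → ℕ) : Prop :=
  IsProperColoring G c ∧ ∀ v, c v ∈ L v

/-- `G` is uniquely `f`-list colorable: there is a list assignment giving each vertex `v`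
a list of exactly `f v` colors, from which `G` has exactly one list coloring. -/
def UniquelyFListColorable {V : Type*} (G : SimpleGraph V) (f : V → ℕ) : Prop :=
  ∃ L : V → Finset ℕ, (∀ v, (L v).card = f v) ∧ ∃! c, IsListColoring G L c

/-- `G` is uniquely `k`-list colorable. -/
def UniquelyKListColorable {V : Type*} (G : SimpleGraph V) (k : ℕ) : Prop :=
  UniquelyFListColorable G (fun _ => k)

/-- The m-number of `G`: the least `k` for which `G` is not uniquely `k`-list colorable. -/
noncomputable def mNumber {V : Type*} (G : SimpleGraph V) : ℕ :=
  sInf {k | ¬ UniquelyKListColorable G k}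

open Finset MvPolynomial

/-- Divided differences: the Lagrange leading-coefficient functional on a 3-point set
kills polynomials of degree at most 1. -/
private lemma dd3 {S : Finset ℕ} (hS : S.card = 3) {j : ℕ} (hj : j ≤ 1) :
    ∑ a ∈ S, (∏ b ∈ S.erase a, ((a : ℚ) - (b : ℚ)))⁻¹ * (a : ℚ) ^ j = 0 := by
  obtain ⟨x, y, z, hxy, hxz, hyz, rfl⟩ := Finset.card_eq_three.mp hS
  have hxy' : (x : ℚ) ≠ y := by exact_mod_cast hxy
  have hxz' : (x : ℚ) ≠ z := by exact_mod_cast hxz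
  have hyz' : (y : ℚ) ≠ z := by exact_mod_cast hyz
  have hx : x ∉ ({y, z} : Finset ℕ) := by simp [hxy, hxz]
  have hy : y ∉ ({z} : Finset ℕ) := by simp [hyz]
  have e1 : ({x, y, z} : Finset ℕ).erase x = {y, z} := Finset.erase_insert hx
  have e2 : ({x, y, z} : Finset ℕ).erase y = {x, z} := by
    ext w
    simp only [Finset.mem_erase, Finset.mem_insert, Finset.mem_singleton]
    constructor
    · rintro ⟨hw, h | h | h⟩ <;> tauto
    · rintro (rfl | rfl) <;> simp_all [eq_comm]
  have e3 : ({x, y, z} : Finset ℕ).erase z = {x, y} := by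
    ext w
    simp only [Finset.mem_erase, Finset.mem_insert, Finset.mem_singleton]
    constructor
    · rintro ⟨hw, h | h | h⟩ <;> tauto
    · rintro (rfl | rfl) <;> simp_all [eq_comm]
  have hx2 : x ∉ ({z} : Finset ℕ) := by simp [hxz]
  have hx3 : x ∉ ({y} : Finset ℕ) := by simp [hxy]
  rw [Finset.sum_insert hx, Finset.sum_insert hy, Finset.sum_singleton, e1, e2, e3,
    Finset.prod_insert hy, Finset.prod_singleton,
    Finset.prod_insert hx2, Finset.prod_singleton,
    Finset.prod_insert hx3, Finset.prod_singleton]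
  have d1 : (x : ℚ) - y ≠ 0 := sub_ne_zero.mpr hxy'
  have d2 : (x : ℚ) - z ≠ 0 := sub_ne_zero.mpr hxz'
  have d3 : (y : ℚ) - x ≠ 0 := sub_ne_zero.mpr hxy'.symm
  have d4 : (y : ℚ) - z ≠ 0 := sub_ne_zero.mpr hyz'
  have d5 : (z : ℚ) - x ≠ 0 := sub_ne_zero.mpr hxz'.symm
  have d6 : (z : ℚ) - y ≠ 0 := sub_ne_zero.mpr hyz'.symm
  interval_cases j <;> field_simp <;> ring

/-- If `G` is uniquely `3`-list colorable, then `e(G) ≥ 2 n(G)`. -/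
theorem edges_ge_of_U3LC
    {V : Type} [Fintype V] [DecidableEq V] (G : SimpleGraph V) [DecidableRel G.Adj]
    (h : UniquelyKListColorable G 3) :
    2 * Fintype.card V ≤ G.edgeFinset.card := by
  classical
  by_contra hlt
  push_neg at hlt
  obtain ⟨L, hL, c, hc, huniq⟩ := h
  -- the edge polynomial
  set E := G.edgeFinset with hE
  let ep : Sym2 V → V × V := fun s => Quot.out s
  have hep : ∀ s ∈ E, G.Adj (ep s).1 (ep s).2 := by
    intro s hs
    rw [SimpleGraph.mem_edgeFinset] at hs
    have h2 : s((ep s).1, (ep s).2) = s := Quot.out_eq s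
    rw [← h2] at hs
    exact hs
  let Q : MvPolynomial V ℚ := ∏ s ∈ E, (X (ep s).1 - X (ep s).2)
  have hdeg : Q.totalDegree ≤ E.card := by
    refine le_trans (MvPolynomial.totalDegree_finset_prod _ _) ?_
    calc ∑ s ∈ E, (X (ep s).1 - X (ep s).2 : MvPolynomial V ℚ).totalDegree
        ≤ ∑ _s ∈ E, 1 := by
          refine Finset.sum_le_sum fun s _ => ?_
          refine le_trans (MvPolynomial.totalDegree_sub _ _) ?_
          simp [MvPolynomial.totalDegree_X]
      _ = E.card := by simp
  let ω : V → ℕ → ℚ := fun v a => (∏ b ∈ (L v).erase a, ((a : ℚ) - (b : ℚ)))⁻¹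
  -- the polynomial vanishes at every grid point other than `c`
  have key : ∀ x : V → ℕ, (∀ v, x v ∈ L v) → x ≠ c →
      eval (fun v => ((x v : ℚ))) Q = 0 := by
    intro x hx hxc
    have hnp : ¬ IsProperColoring G x := by
      intro hp
      exact hxc (huniq x ⟨hp, hx⟩)
    rw [IsProperColoring] at hnp
    push_neg at hnp
    obtain ⟨u, w, hadj, hcuw⟩ := hnp
    have hmem : s(u, w) ∈ E := by
      rw [SimpleGraph.mem_edgeFinset]; exact hadj
    rw [show Q = ∏ s ∈ E, (X (ep s).1 - X (ep s).2 : MvPolynomial V ℚ) from rfl, map_prod]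
    refine Finset.prod_eq_zero hmem ?_
    have h2 : s((ep s(u, w)).1, (ep s(u, w)).2) = s(u, w) := Quot.out_eq _
    rcases (Sym2.mk_eq_mk_iff (p := ep s(u, w)) (q := (u, w))).mp h2 with h3 | h3 <;> simp [h3, hcuw]
  -- first evaluation of the functional Λ
  have hΛ1 : ∑ x ∈ Fintype.piFinset L, (∏ v, ω v (x v)) * eval (fun v => ((x v : ℚ))) Q
      = (∏ v, ω v (c v)) * eval (fun v => ((c v : ℚ))) Q := by
    refine Finset.sum_eq_single_of_mem c (by rw [Fintype.mem_piFinset]; exact hc.2) ?_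
    intro x hx hxc
    rw [key x (Fintype.mem_piFinset.mp hx) hxc, mul_zero]
  -- the value at `c` is nonzero
  have hne : (∏ v, ω v (c v)) * eval (fun v => ((c v : ℚ))) Q ≠ 0 := by
    apply mul_ne_zero
    · rw [Finset.prod_ne_zero_iff]
      intro v _
      apply inv_ne_zero
      rw [Finset.prod_ne_zero_iff]
      intro b hb
      have hbv : b ≠ c v := (Finset.mem_erase.mp hb).1
      have hbv' : c v ≠ b := hbv.symm
      have : (c v : ℚ) ≠ (b : ℚ) := by exact_mod_cast hbv'
      exact sub_ne_zero.mpr this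
    · rw [map_prod, Finset.prod_ne_zero_iff]
      intro s hs
      have hadj := hep s hs
      have hcc : c (ep s).1 ≠ c (ep s).2 := hc.1 hadj
      have : ((c (ep s).1 : ℚ)) ≠ ((c (ep s).2 : ℚ)) := by exact_mod_cast hcc
      simpa [sub_ne_zero] using this
  -- second evaluation: Λ = 0 since every monomial has total degree < 2n
  have hΛ0 : ∑ x ∈ Fintype.piFinset L, (∏ v, ω v (x v)) * eval (fun v => ((x v : ℚ))) Q = 0 := by
    have expand : ∀ x : V → ℕ, eval (fun v => ((x v : ℚ))) Q
        = ∑ d ∈ Q.support, coeff d Q * ∏ v, ((x v : ℚ)) ^ d v := fun x =>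
      MvPolynomial.eval_eq' _ _
    calc ∑ x ∈ Fintype.piFinset L, (∏ v, ω v (x v)) * eval (fun v => ((x v : ℚ))) Q
        = ∑ d ∈ Q.support, ∑ x ∈ Fintype.piFinset L,
            coeff d Q * ∏ v, (ω v (x v) * ((x v : ℚ)) ^ d v) := by
          simp_rw [expand, Finset.mul_sum]
          rw [Finset.sum_comm]
          congr 1; ext d; congr 1; ext x
          rw [Finset.prod_mul_distrib]
          ring
      _ = ∑ d ∈ Q.support, coeff d Q *
            ∏ v, ∑ a ∈ L v, (ω v a * ((a : ℚ)) ^ d v) := by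
          refine Finset.sum_congr rfl fun d _ => ?_
          have hps : ∑ x ∈ Fintype.piFinset L, ∏ v, (ω v (x v) * ((x v : ℚ)) ^ d v)
              = ∏ v, ∑ a ∈ L v, (ω v a * ((a : ℚ)) ^ d v) :=
            (Finset.prod_univ_sum L (fun v a => ω v a * ((a : ℚ)) ^ d v)).symm
          rw [← Finset.mul_sum, hps]
      _ = 0 := by
          refine Finset.sum_eq_zero fun d hd => ?_
          have hsum : ∑ v, d v ≤ E.card := by
            have h1 : (d.sum fun _ e => e) ≤ Q.totalDegree :=
              MvPolynomial.le_totalDegree hd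
            rw [Finsupp.sum_fintype _ _ (fun _ => rfl)] at h1
            exact h1.trans hdeg
          have hv0 : ∃ v0 : V, d v0 ≤ 1 := by
            by_contra hall
            push_neg at hall
            have h2n : 2 * Fintype.card V ≤ ∑ v, d v := by
              calc 2 * Fintype.card V = ∑ _v : V, 2 := by
                    simp [Finset.sum_const, Finset.card_univ, mul_comm]
                _ ≤ ∑ v, d v := Finset.sum_le_sum fun v _ => hall v
            omega
          obtain ⟨v0, hv0⟩ := hv0
          have : ∑ a ∈ L v0, (ω v0 a * ((a : ℚ)) ^ d v0) = 0 := dd3 (hL v0) hv0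
          rw [Finset.prod_eq_zero (Finset.mem_univ v0) this, mul_zero]
  exact hne (hΛ1 ▸ hΛ0)
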